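/- On four qubits (with qubits labelled p, q, r, s in tensor-product order), let A = (1/8)(X_r Y_s X_p X_q + Y_r X_s X_p X_q + Y_r Y_s Y_p X_q + Y_r Y_s X_p Y_q − X_r X_s Y_p X_q − X_r X_s X_p Y_q − Y_r X_s Y_p Y_q − X_r Y_s Y_p Y_q). Then every eigenvalue of A lies in the set {0, 1, −1}; equivalently, the spectrum of A is contained in {0, 1, −1}. -/

import Mathlib

open Matrix

/-- The Pauli `X` matrix. -/
noncomputable def PX : Matrix (Fin 2) (Fin 2) ℂ := !![0, 1; 1, 0]

/-- The Pauli `Y` matrix. -/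
noncomputable def PY : Matrix (Fin 2) (Fin 2) ℂ := !![0, -Complex.I; Complex.I, 0]

/-- The Pauli `Z` matrix. -/
noncomputable def PZ : Matrix (Fin 2) (Fin 2) ℂ := !![1, 0; 0, -1]

/-- The operator on `N` qubits acting as the single-qubit operator `M` on qubit `k`
and as the identity on all other qubits (the `N`-qubit space, i.e. the `N`-fold tensor
product of `ℂ²`, is indexed by functions `Fin N → Fin 2`). -/
noncomputable def opN (N k : ℕ) (M : Matrix (Fin 2) (Fin 2) ℂ) :
    Matrix (Fin N → Fin 2) (Fin N → Fin 2) ℂ :=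
  Matrix.of fun v w =>
    ∏ j : Fin N, if (j : ℕ) = k then M (v j) (w j) else (if v j = w j then 1 else 0)

/-- The double-qubit excitation generator `A_{pqrs}` on four qubits
labelled `p = 0`, `q = 1`, `r = 2`, `s = 3` (in tensor-product order). -/
noncomputable def Aop : Matrix (Fin 4 → Fin 2) (Fin 4 → Fin 2) ℂ :=
  (1 / 8 : ℂ) •
    (opN 4 2 PX * opN 4 3 PY * opN 4 0 PX * opN 4 1 PX
      + opN 4 2 PY * opN 4 3 PX * opN 4 0 PX * opN 4 1 PX
      + opN 4 2 PY * opN 4 3 PY * opN 4 0 PY * opN 4 1 PX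
      + opN 4 2 PY * opN 4 3 PY * opN 4 0 PX * opN 4 1 PY
      - opN 4 2 PX * opN 4 3 PX * opN 4 0 PY * opN 4 1 PX
      - opN 4 2 PX * opN 4 3 PX * opN 4 0 PX * opN 4 1 PY
      - opN 4 2 PY * opN 4 3 PX * opN 4 0 PY * opN 4 1 PY
      - opN 4 2 PX * opN 4 3 PY * opN 4 0 PY * opN 4 1 PY)

/-- Auxiliary: the operator acting as `f j` on qubit `j` for each `j`. -/
noncomputable def opP (f : Fin 4 → Matrix (Fin 2) (Fin 2) ℂ) :
    Matrix (Fin 4 → Fin 2) (Fin 4 → Fin 2) ℂ :=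
  Matrix.of fun v w => ∏ j, f j (v j) (w j)

lemma opP_mul (f g : Fin 4 → Matrix (Fin 2) (Fin 2) ℂ) :
    opP f * opP g = opP (fun j => f j * g j) := by
  ext v w
  simp only [opP, Matrix.mul_apply, Matrix.of_apply, ← Finset.prod_mul_distrib]
  rw [← Fintype.piFinset_univ, Finset.prod_univ_sum]

lemma opN_eq (k : ℕ) (M : Matrix (Fin 2) (Fin 2) ℂ) :
    opN 4 k M = opP (fun j => if (j : ℕ) = k then M else 1) := by
  ext v w
  simp only [opN, opP, Matrix.of_apply]
  refine Finset.prod_congr rfl fun j _ => ?_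
  split <;> simp [Matrix.one_apply]

lemma vec4_eq_iff {α : Type*} (a b c d a' b' c' d' : α) :
    (![a,b,c,d] = ![a',b',c',d']) ↔ (a = a' ∧ b = b' ∧ c = c' ∧ d = d') := by
  constructor
  · intro h; exact ⟨congrFun h 0, congrFun h 1, congrFun h 2, congrFun h 3⟩
  · rintro ⟨rfl, rfl, rfl, rfl⟩; rfl

set_option maxHeartbeats 1000000 in
lemma Aop_entry (x0 x1 x2 x3 y0 y1 y2 y3 : Fin 2) :
    Aop ![x0,x1,x2,x3] ![y0,y1,y2,y3] =
      (Complex.I • Matrix.single (![0,0,1,1] : Fin 4 → Fin 2) (![1,1,0,0] : Fin 4 → Fin 2) (1:ℂ)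
        - Complex.I • Matrix.single (![1,1,0,0] : Fin 4 → Fin 2) (![0,0,1,1] : Fin 4 → Fin 2) (1:ℂ))
        ![x0,x1,x2,x3] ![y0,y1,y2,y3] := by
  rw [Aop]
  simp only [opN_eq, opP_mul]
  simp only [opP, Matrix.smul_apply, Matrix.add_apply, Matrix.sub_apply, Matrix.of_apply,
    Fin.prod_univ_four]
  have e0 : ((0:Fin 4):ℕ) = 0 := rfl
  have e1 : ((1:Fin 4):ℕ) = 1 := rfl
  have e2 : ((2:Fin 4):ℕ) = 2 := rfl
  have e3 : ((3:Fin 4):ℕ) = 3 := rfl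
  norm_num [Matrix.one_apply, e0, e1, e2, e3]
  fin_cases x0 <;> fin_cases x1 <;> fin_cases x2 <;> fin_cases x3 <;>
    fin_cases y0 <;> fin_cases y1 <;> fin_cases y2 <;> fin_cases y3 <;>
    · simp [PX, PY, Matrix.single, vec4_eq_iff]
      try ring_nf
      try simp [Complex.I_sq, pow_succ]
      try ring

lemma vec4_eta (v : Fin 4 → Fin 2) : v = ![v 0, v 1, v 2, v 3] := by
  funext j; fin_cases j <;> rfl

lemma Aop_eq :
    Aop = Complex.I • Matrix.single (![0,0,1,1] : Fin 4 → Fin 2) (![1,1,0,0] : Fin 4 → Fin 2) (1:ℂ)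
        - Complex.I • Matrix.single (![1,1,0,0] : Fin 4 → Fin 2) (![0,0,1,1] : Fin 4 → Fin 2) (1:ℂ) := by
  ext v w
  rw [vec4_eta v, vec4_eta w]
  exact Aop_entry (v 0) (v 1) (v 2) (v 3) (w 0) (w 1) (w 2) (w 3)

lemma Aop_cube : Aop ^ 3 = Aop := by
  have hab : (![0,0,1,1] : Fin 4 → Fin 2) ≠ ![1,1,0,0] := fun h => by simpa using congrFun h 0
  have hba : (![1,1,0,0] : Fin 4 → Fin 2) ≠ ![0,0,1,1] := fun h => by simpa using congrFun h 0
  have e1 : Matrix.single (![0,0,1,1] : Fin 4 → Fin 2) (![1,1,0,0] : Fin 4 → Fin 2) (1:ℂ) *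
      Matrix.single (![0,0,1,1] : Fin 4 → Fin 2) (![1,1,0,0] : Fin 4 → Fin 2) (1:ℂ) = 0 :=
    Matrix.single_mul_single_of_ne _ _ _ _ hba _
  have e2 : Matrix.single (![1,1,0,0] : Fin 4 → Fin 2) (![0,0,1,1] : Fin 4 → Fin 2) (1:ℂ) *
      Matrix.single (![1,1,0,0] : Fin 4 → Fin 2) (![0,0,1,1] : Fin 4 → Fin 2) (1:ℂ) = 0 :=
    Matrix.single_mul_single_of_ne _ _ _ _ hab _
  have e3 : Matrix.single (![0,0,1,1] : Fin 4 → Fin 2) (![1,1,0,0] : Fin 4 → Fin 2) (1:ℂ) *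
      Matrix.single (![1,1,0,0] : Fin 4 → Fin 2) (![0,0,1,1] : Fin 4 → Fin 2) (1:ℂ) =
      Matrix.single (![0,0,1,1] : Fin 4 → Fin 2) (![0,0,1,1] : Fin 4 → Fin 2) (1:ℂ) := by
    rw [Matrix.single_mul_single_same, one_mul]
  have e4 : Matrix.single (![1,1,0,0] : Fin 4 → Fin 2) (![0,0,1,1] : Fin 4 → Fin 2) (1:ℂ) *
      Matrix.single (![0,0,1,1] : Fin 4 → Fin 2) (![1,1,0,0] : Fin 4 → Fin 2) (1:ℂ) =
      Matrix.single (![1,1,0,0] : Fin 4 → Fin 2) (![1,1,0,0] : Fin 4 → Fin 2) (1:ℂ) := by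
    rw [Matrix.single_mul_single_same, one_mul]
  have e5 : Matrix.single (![0,0,1,1] : Fin 4 → Fin 2) (![0,0,1,1] : Fin 4 → Fin 2) (1:ℂ) *
      Matrix.single (![0,0,1,1] : Fin 4 → Fin 2) (![1,1,0,0] : Fin 4 → Fin 2) (1:ℂ) =
      Matrix.single (![0,0,1,1] : Fin 4 → Fin 2) (![1,1,0,0] : Fin 4 → Fin 2) (1:ℂ) := by
    rw [Matrix.single_mul_single_same, one_mul]
  have e6 : Matrix.single (![0,0,1,1] : Fin 4 → Fin 2) (![0,0,1,1] : Fin 4 → Fin 2) (1:ℂ) *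
      Matrix.single (![1,1,0,0] : Fin 4 → Fin 2) (![0,0,1,1] : Fin 4 → Fin 2) (1:ℂ) = 0 :=
    Matrix.single_mul_single_of_ne _ _ _ _ hab _
  have e7 : Matrix.single (![1,1,0,0] : Fin 4 → Fin 2) (![1,1,0,0] : Fin 4 → Fin 2) (1:ℂ) *
      Matrix.single (![0,0,1,1] : Fin 4 → Fin 2) (![1,1,0,0] : Fin 4 → Fin 2) (1:ℂ) = 0 :=
    Matrix.single_mul_single_of_ne _ _ _ _ hba _
  have e8 : Matrix.single (![1,1,0,0] : Fin 4 → Fin 2) (![1,1,0,0] : Fin 4 → Fin 2) (1:ℂ) *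
      Matrix.single (![1,1,0,0] : Fin 4 → Fin 2) (![0,0,1,1] : Fin 4 → Fin 2) (1:ℂ) =
      Matrix.single (![1,1,0,0] : Fin 4 → Fin 2) (![0,0,1,1] : Fin 4 → Fin 2) (1:ℂ) := by
    rw [Matrix.single_mul_single_same, one_mul]
  rw [pow_succ, pow_two, Aop_eq]
  simp only [sub_mul, mul_sub, Matrix.smul_mul, Matrix.mul_smul, smul_smul,
    e1, e2, e3, e4, Complex.I_mul_I, smul_zero, sub_zero, zero_sub, neg_smul, one_smul,
    sub_neg_eq_add, neg_neg]
  simp only [add_mul, sub_mul, Matrix.smul_mul, Matrix.mul_smul, e5, e6, e7, e8,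
    smul_zero, sub_zero, zero_sub, add_zero, zero_add, neg_smul, neg_neg, smul_smul]

open Polynomial in
/-- the spectrum of `A` is contained in `{0, 1, −1}`. -/
theorem Aop_spectrum_subset : spectrum ℂ Aop ⊆ ({0, 1, -1} : Set ℂ) := by
  intro z hz
  have hmem := spectrum.subset_polynomial_aeval Aop ((X : ℂ[X]) ^ 3 - X) ⟨z, hz, rfl⟩
  have hp : (Polynomial.aeval Aop) ((X : ℂ[X]) ^ 3 - X) = 0 := by
    simp [map_sub, aeval_X_pow, aeval_X, Aop_cube]
  rw [hp, spectrum.zero_eq] at hmem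
  simp only [eval_sub, eval_pow, eval_X, Set.mem_singleton_iff] at hmem
  have hzz : z * (z - 1) * (z + 1) = 0 := by linear_combination hmem
  rcases mul_eq_zero.mp hzz with h | h
  · rcases mul_eq_zero.mp h with h | h
    · left; exact h
    · right; left; linear_combination h
  · right; right
    simp only [Set.mem_singleton_iff]
    linear_combination h
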